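/- Let d ≥ 1 and let m_1,…,m_d be positive integers with M := Σ_{k=1}^d m_k. Then Π_{k=1}^d (2 m_k)! ≤ (2π)^{d/2} · e^{M/2} · Γ( (5/2) M + 1 ) / sqrt(5 π M). -/
import Mathlib

open Real Finset

/-- For positive integers `m_1,…,m_d` with `M = Σ m_k`:
`∏_{k=1}^d (2 m_k)! ≤ (2π)^{d/2} e^{M/2} Γ((5/2) M + 1) / √(5 π M)`. -/
theorem prod_factorial_le_gamma (d : ℕ) (hd : 1 ≤ d) (m : Fin d → ℕ) (hm : ∀ k, 1 ≤ m k) :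
    (∏ k, (Nat.factorial (2 * m k) : ℝ)) ≤
      (2 * Real.pi) ^ ((d : ℝ) / 2) * Real.exp ((∑ k, (m k : ℝ)) / 2) *
        (Real.Gamma ((5 / 2) * (∑ k, (m k : ℝ)) + 1) /
          Real.sqrt (5 * Real.pi * (∑ k, (m k : ℝ)))) := by
  set M : ℕ := ∑ k, m k with hM
  have hsum : (∑ k, (m k : ℝ)) = (M : ℝ) := by rw [hM]; push_cast; ring
  rw [hsum]
  have hM1 : 1 ≤ M := le_trans (hm ⟨0, hd⟩)
    (Finset.single_le_sum (f := m) (fun i _ => Nat.zero_le _) (Finset.mem_univ _))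
  set c : ℕ := M / 2 with hc
  -- step 1: ∏ ≤ (2M)!
  have h1 : (∏ k, Nat.factorial (2 * m k)) ≤ Nat.factorial (2 * M) := by
    apply Nat.le_of_dvd (Nat.factorial_pos _)
    have := Nat.prod_factorial_dvd_factorial_sum Finset.univ (fun k => 2 * m k)
    rwa [← Finset.mul_sum] at this
  have h2 : Nat.factorial (2 * M) * (2 * M + 1) ^ c ≤ Nat.factorial (2 * M + c) :=
    Nat.factorial_mul_pow_le_factorial
  have hMR : (1 : ℝ) ≤ (M : ℝ) := by exact_mod_cast hM1
  have h3 : ((2 * M + c : ℕ) : ℝ) + 1 ≤ (5 / 2) * (M : ℝ) + 1 := by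
    have hcle : (c : ℝ) ≤ (M : ℝ) / 2 := by
      have h := Nat.cast_div_le (α := ℝ) (m := M) (n := 2)
      simpa using h
    push_cast
    linarith
  have h4 : Real.Gamma (((2 * M + c : ℕ) : ℝ) + 1) ≤ Real.Gamma ((5 / 2) * (M : ℝ) + 1) := by
    rcases eq_or_lt_of_le h3 with h | h
    · rw [h]
    · refine le_of_lt (Real.Gamma_strictMonoOn_Ici ?_ ?_ h)
      · simp only [Set.mem_Ici]; push_cast; linarith
      · simp only [Set.mem_Ici]; linarith
  rw [Real.Gamma_nat_eq_factorial] at h4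
  have h5 : ((Nat.factorial (2 * M)) : ℝ) * ((2 * M + 1 : ℕ) : ℝ) ^ c ≤
      Real.Gamma ((5 / 2) * (M : ℝ) + 1) := by
    calc ((Nat.factorial (2 * M)) : ℝ) * ((2 * M + 1 : ℕ) : ℝ) ^ c
        = ((Nat.factorial (2 * M) * (2 * M + 1) ^ c : ℕ) : ℝ) := by push_cast; ring
      _ ≤ ((Nat.factorial (2 * M + c) : ℕ) : ℝ) := by exact_mod_cast h2
      _ ≤ _ := h4
  have hπ := Real.pi_pos
  set t : ℝ := ((2 * M + 1 : ℕ) : ℝ) ^ c with ht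
  have ht1 : (1 : ℝ) ≤ t := one_le_pow₀ (by exact_mod_cast Nat.le_add_left 1 (2*M))
  -- key scalar inequality
  have key : Real.sqrt (5 * Real.pi * (M : ℝ)) ≤
      (2 * Real.pi) ^ ((d : ℝ) / 2) * Real.exp ((M : ℝ) / 2) * t := by
    have hbase : (1 : ℝ) ≤ 2 * Real.pi := by nlinarith [Real.pi_gt_three]
    have hd2 : Real.sqrt (2 * Real.pi) ≤ (2 * Real.pi) ^ ((d : ℝ) / 2) := by
      rw [Real.sqrt_eq_rpow]
      apply Real.rpow_le_rpow_of_exponent_le hbase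
      have : (1 : ℝ) ≤ (d : ℝ) := by exact_mod_cast hd
      linarith
    have hstep : Real.sqrt (5 * Real.pi * (M : ℝ)) ≤
        Real.sqrt (2 * Real.pi) * Real.exp ((M : ℝ) / 2) * t := by
      rcases eq_or_lt_of_le hM1 with h | h
      · -- M = 1, c = 0, t = 1
        have hMeq : M = 1 := h.symm
        have hc0 : c = 0 := by rw [hc, hMeq]
        have ht1' : t = 1 := by rw [ht, hc0, pow_zero]
        rw [ht1', mul_one, hMeq]
        rw [Real.exp_half, ← Real.sqrt_mul (by linarith)]
        apply Real.sqrt_le_sqrt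
        have he : (2.7182818283 : ℝ) < Real.exp 1 := Real.exp_one_gt_d9
        push_cast
        nlinarith [mul_pos hπ (by linarith : (0:ℝ) < Real.exp 1 - 2.5)]
      · -- M ≥ 2, so c ≥ 1 and t ≥ 2M+1
        have hM2 : 2 ≤ M := h
        have hc1 : 1 ≤ c := by rw [hc]; omega
        have htge : ((2 * M + 1 : ℕ) : ℝ) ≤ t := by
          rw [ht]
          calc ((2 * M + 1 : ℕ) : ℝ) = ((2 * M + 1 : ℕ) : ℝ) ^ 1 := (pow_one _).symm
            _ ≤ _ := pow_le_pow_right₀ (by exact_mod_cast Nat.le_add_left 1 (2*M)) hc1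
        have hexp1 : (1 : ℝ) ≤ Real.exp ((M : ℝ) / 2) := Real.one_le_exp (by positivity)
        have hA : Real.sqrt (5 * Real.pi * (M : ℝ)) ≤ Real.sqrt (2 * Real.pi) * ((2 * M + 1 : ℕ) : ℝ) := by
          rw [← Real.sqrt_sq (by positivity : (0:ℝ) ≤ ((2 * M + 1 : ℕ) : ℝ)), ← Real.sqrt_mul (by linarith)]
          apply Real.sqrt_le_sqrt
          push_cast
          have hpoly : 5 * (M:ℝ) ≤ 2 * (2*(M:ℝ)+1)^2 := by nlinarith
          nlinarith [mul_le_mul_of_nonneg_left hpoly hπ.le]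
        calc Real.sqrt (5 * Real.pi * (M : ℝ)) ≤ Real.sqrt (2 * Real.pi) * ((2 * M + 1 : ℕ) : ℝ) := hA
          _ ≤ Real.sqrt (2 * Real.pi) * t := by
              apply mul_le_mul_of_nonneg_left htge (Real.sqrt_nonneg _)
          _ ≤ Real.sqrt (2 * Real.pi) * Real.exp ((M : ℝ) / 2) * t :=
              mul_le_mul_of_nonneg_right (le_mul_of_one_le_right (Real.sqrt_nonneg _) hexp1)
                (by linarith)
    calc Real.sqrt (5 * Real.pi * (M : ℝ)) ≤ Real.sqrt (2 * Real.pi) * Real.exp ((M : ℝ) / 2) * t := hstep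
      _ ≤ (2 * Real.pi) ^ ((d : ℝ) / 2) * Real.exp ((M : ℝ) / 2) * t := by
          apply mul_le_mul_of_nonneg_right (mul_le_mul_of_nonneg_right hd2 (Real.exp_pos _).le)
          linarith
  -- combine
  have hsS : (0 : ℝ) < Real.sqrt (5 * Real.pi * (M : ℝ)) := Real.sqrt_pos.mpr (by positivity)
  have hfin : ((Nat.factorial (2 * M)) : ℝ) ≤
      (2 * Real.pi) ^ ((d : ℝ) / 2) * Real.exp ((M : ℝ) / 2) *
        (Real.Gamma ((5 / 2) * (M : ℝ) + 1) / Real.sqrt (5 * Real.pi * (M : ℝ))) := by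
    rw [← mul_div_assoc, le_div_iff₀ hsS]
    calc ((Nat.factorial (2 * M)) : ℝ) * Real.sqrt (5 * Real.pi * (M : ℝ))
        ≤ ((Nat.factorial (2 * M)) : ℝ) * ((2 * Real.pi) ^ ((d : ℝ) / 2) * Real.exp ((M : ℝ) / 2) * t) :=
          mul_le_mul_of_nonneg_left key (Nat.cast_nonneg _)
      _ = (2 * Real.pi) ^ ((d : ℝ) / 2) * Real.exp ((M : ℝ) / 2) *
            (((Nat.factorial (2 * M)) : ℝ) * t) := by ring
      _ ≤ (2 * Real.pi) ^ ((d : ℝ) / 2) * Real.exp ((M : ℝ) / 2) *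
            Real.Gamma ((5 / 2) * (M : ℝ) + 1) := by
          apply mul_le_mul_of_nonneg_left h5
          positivity
  calc (∏ k, (Nat.factorial (2 * m k) : ℝ)) = ((∏ k, Nat.factorial (2 * m k) : ℕ) : ℝ) := by push_cast; ring
    _ ≤ ((Nat.factorial (2 * M)) : ℝ) := by exact_mod_cast h1
    _ ≤ _ := hfin
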